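/- Let α > 0 and θ > 2. The coefficient array β defined by β_{j,k} = 2^{−j/2} if k < 2^{j/(1+2α)} and β_{j,k} = 0 otherwise does NOT satisfy the condition A^α_θ, i.e., sup_{J∈ℕ} 2^{2Jα} Σ_{j≥J} t_{j,J}(β) = ∞. -/

import Mathlib

open scoped BigOperators

/-- `N(J,j) = min(⌊2^J (j−J+1)^{−θ}⌋, 2^j)`. -/
noncomputable def NJj (θ : ℝ) (J j : ℕ) : ℕ :=
  min ⌊(2 : ℝ) ^ J * ((j : ℝ) - (J : ℝ) + 1) ^ (-θ)⌋₊ (2 ^ j)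

/-- `t_{j,J}(β)`: the minimum over subsets `A` of `{0,…,2^j−1}` of cardinality `N(J,j)`
of `Σ_{k ∉ A} β_{j,k}²`, i.e. the sum of squares of all but the `N(J,j)` largest
`|β_{j,k}|` at level `j`. -/
noncomputable def tTail (β : ℕ → ℕ → ℝ) (θ : ℝ) (J j : ℕ) : ℝ :=
  sInf {x : ℝ | ∃ A : Finset ℕ, A ⊆ Finset.range (2 ^ j) ∧ A.card = NJj θ J j ∧
    x = ∑ k ∈ Finset.range (2 ^ j) \ A, (β j k) ^ 2}

/-- The condition `A^α_θ`. -/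
def CondA (β : ℕ → ℕ → ℝ) (α θ : ℝ) : Prop :=
  ∃ C : ℝ, ∀ J : ℕ,
    (2 : ℝ) ^ (2 * (J : ℝ) * α) *
      ∑' j : ℕ, (if J ≤ j then tTail β θ J j else 0) ≤ C

lemma NJj_le (θ : ℝ) (J j : ℕ) : NJj θ J j ≤ (Finset.range (2 ^ j)).card := by
  rw [Finset.card_range]; exact min_le_right _ _

/-- A lower bound valid for all admissible sets gives a lower bound on `tTail`. -/
lemma tTail_ge (β : ℕ → ℕ → ℝ) (θ : ℝ) (J j : ℕ) (b : ℝ)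
    (h : ∀ A : Finset ℕ, A ⊆ Finset.range (2 ^ j) → A.card = NJj θ J j →
      b ≤ ∑ k ∈ Finset.range (2 ^ j) \ A, (β j k) ^ 2) :
    b ≤ tTail β θ J j := by
  apply le_csInf
  · obtain ⟨A, hA, hcard⟩ := Finset.exists_subset_card_eq
      (NJj_le θ J j)
    exact ⟨_, A, hA, hcard, rfl⟩
  · rintro x ⟨A, hA, hcard, rfl⟩
    exact h A hA hcard

/-- `tTail` is bounded above by the sum over some admissible set. -/
lemma tTail_le (β : ℕ → ℕ → ℝ) (θ : ℝ) (J j : ℕ) :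
    ∃ A : Finset ℕ, A ⊆ Finset.range (2 ^ j) ∧ A.card = NJj θ J j ∧
      tTail β θ J j ≤ ∑ k ∈ Finset.range (2 ^ j) \ A, (β j k) ^ 2 := by
  obtain ⟨A, hA, hcard⟩ := Finset.exists_subset_card_eq
    (NJj_le θ J j)
  refine ⟨A, hA, hcard, csInf_le ⟨0, ?_⟩ ⟨A, hA, hcard, rfl⟩⟩
  rintro x ⟨B, -, -, rfl⟩
  positivity

/-- the array `β_{j,k} = 2^{−j/2}` for `k < 2^{j/(1+2α)}` and `0`
otherwise does not satisfy the condition `A^α_θ`. -/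
theorem stmt_15 (α θ : ℝ) (hα : 0 < α) (hθ : 2 < θ)
    (β : ℕ → ℕ → ℝ)
    (hβdef : ∀ j k : ℕ, β j k =
      if (k : ℝ) < (2 : ℝ) ^ ((j : ℝ) / (1 + 2 * α)) then (2 : ℝ) ^ (-(j : ℝ) / 2)
      else 0) :
    ¬ CondA β α θ := by
  rintro ⟨C, hC⟩
  set p : ℝ := 1 + 2 * α with hp_def
  have hp1 : 1 < p := by simp only [hp_def]; linarith
  have hp0 : 0 < p := by linarith
  have hθ1 : (1 : ℝ) ≤ θ := by linarith
  -- squares of the coefficients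
  have hsq : ∀ j k : ℕ, β j k ^ 2 =
      if (k : ℝ) < (2 : ℝ) ^ ((j : ℝ) / p) then (2 : ℝ) ^ (-(j : ℝ)) else 0 := by
    intro j k
    rw [hβdef j k]
    split_ifs with h
    · rw [← Real.rpow_natCast ((2 : ℝ) ^ (-(j : ℝ) / 2)) 2,
        ← Real.rpow_mul (by norm_num)]
      congr 1
      push_cast
      ring
    · ring
  have hsum : ∀ (j : ℕ) (s : Finset ℕ), ∑ k ∈ s, β j k ^ 2 =
      ((s.filter (fun k : ℕ => (k : ℝ) < (2 : ℝ) ^ ((j : ℝ) / p))).card : ℝ) *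
        (2 : ℝ) ^ (-(j : ℝ)) := by
    intro j s
    rw [Finset.sum_congr rfl (fun k _ => hsq j k), ← Finset.sum_filter,
      Finset.sum_const, nsmul_eq_mul]
  -- choose L with C < 2^(2αL - 2)
  have h2a : (1 : ℝ) < (2 : ℝ) ^ (2 * α) :=
    (Real.one_lt_rpow_iff_of_pos (by norm_num)).mpr (Or.inl ⟨by norm_num, by positivity⟩)
  obtain ⟨L, hL⟩ := pow_unbounded_of_one_lt (max C 0 * 4 + 1) h2a
  have hLbound : C < (2 : ℝ) ^ (2 * α * (L : ℝ) - 2) := by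
    have e1 : (2 : ℝ) ^ (2 * α * (L : ℝ) - 2) = ((2 : ℝ) ^ (2 * α)) ^ L / 4 := by
      rw [← Real.rpow_natCast ((2 : ℝ) ^ (2 * α)) L,
        ← Real.rpow_mul (by norm_num), Real.rpow_sub (by norm_num)]
      norm_num [mul_comm]
    rw [e1]
    have := le_max_left C 0
    linarith
  -- choose J large
  obtain ⟨J0, hJ0⟩ := exists_nat_ge ((p * L + (2 : ℝ) ^ ((L : ℝ) + 1) + 1) / (2 * α))
  set J : ℕ := max J0 (L + 1) with hJ_def
  have hJL : L + 1 ≤ J := le_max_right _ _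
  have hJLnat : L ≤ J := le_trans (Nat.le_succ L) hJL
  have hJL' : (L : ℝ) + 1 ≤ J := by exact_mod_cast hJL
  have hJbig : p * L + (2 : ℝ) ^ ((L : ℝ) + 1) + 1 ≤ 2 * α * J := by
    have h1 : (J0 : ℝ) ≤ J := by exact_mod_cast le_max_left J0 (L + 1)
    have h2 : (p * L + (2 : ℝ) ^ ((L : ℝ) + 1) + 1) / (2 * α) ≤ (J : ℝ) := le_trans hJ0 h1
    calc p * L + (2 : ℝ) ^ ((L : ℝ) + 1) + 1
        = ((p * L + (2 : ℝ) ^ ((L : ℝ) + 1) + 1) / (2 * α)) * (2 * α) := by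
          field_simp
      _ ≤ (J : ℝ) * (2 * α) := by
          apply mul_le_mul_of_nonneg_right h2 (by linarith)
      _ = 2 * α * J := by ring
  have h2L1 : (1 : ℝ) ≤ (2 : ℝ) ^ ((L : ℝ) + 1) := by
    apply Real.one_le_rpow (by norm_num) (by positivity)
  -- define j*
  set js : ℕ := ⌈p * ((J : ℝ) - L)⌉₊ with hjs_def
  have hJLpos : (0 : ℝ) ≤ p * ((J : ℝ) - L) := by
    apply mul_nonneg (le_of_lt hp0); linarith
  have hjs_ge : p * ((J : ℝ) - L) ≤ js := Nat.le_ceil _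
  have hjs_lt : (js : ℝ) < p * ((J : ℝ) - L) + 1 := Nat.ceil_lt_add_one hJLpos
  have hpJL : p * ((J : ℝ) - L) = (J : ℝ) + (2 * α * J - p * L) := by
    simp only [hp_def]; ring
  have hJjs : J ≤ js := by
    have : (J : ℝ) ≤ js := by
      rw [hpJL] at hjs_ge
      nlinarith [h2L1]
    exact_mod_cast this
  -- bound on N
  set m1 : ℝ := (js : ℝ) - (J : ℝ) + 1 with hm1_def
  have hm1 : (2 : ℝ) ^ ((L : ℝ) + 1) ≤ m1 := by
    rw [hpJL] at hjs_ge
    simp only [hm1_def]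
    linarith
  have hm1_1 : (1 : ℝ) ≤ m1 := le_trans h2L1 hm1
  have hN : ((NJj θ J js : ℕ) : ℝ) ≤ (2 : ℝ) ^ ((J : ℝ) - L - 1) := by
    have hfloor : ((NJj θ J js : ℕ) : ℝ) ≤ (2 : ℝ) ^ J * m1 ^ (-θ) := by
      calc ((NJj θ J js : ℕ) : ℝ)
          ≤ ((⌊(2 : ℝ) ^ J * ((js : ℝ) - (J : ℝ) + 1) ^ (-θ)⌋₊ : ℕ) : ℝ) :=
            Nat.cast_le.mpr (min_le_left _ _)
        _ ≤ (2 : ℝ) ^ J * ((js : ℝ) - (J : ℝ) + 1) ^ (-θ) :=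
            Nat.floor_le (by
              apply mul_nonneg (by positivity)
              apply Real.rpow_nonneg
              simp only [← hm1_def]; linarith)
        _ = (2 : ℝ) ^ J * m1 ^ (-θ) := by rw [← hm1_def]
    have hrp : m1 ^ (-θ) ≤ (2 : ℝ) ^ (-((L : ℝ) + 1)) := by
      rw [Real.rpow_neg (by linarith : (0 : ℝ) ≤ m1),
        Real.rpow_neg (by norm_num : (0 : ℝ) ≤ (2 : ℝ))]
      apply inv_anti₀ (by positivity)
      calc (2 : ℝ) ^ ((L : ℝ) + 1) ≤ m1 := hm1
        _ = m1 ^ (1 : ℝ) := (Real.rpow_one _).symm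
        _ ≤ m1 ^ θ := Real.rpow_le_rpow_of_exponent_le hm1_1 hθ1
    calc ((NJj θ J js : ℕ) : ℝ)
        ≤ (2 : ℝ) ^ J * m1 ^ (-θ) := hfloor
      _ ≤ (2 : ℝ) ^ J * (2 : ℝ) ^ (-((L : ℝ) + 1)) := by
          apply mul_le_mul_of_nonneg_left hrp (by positivity)
      _ = (2 : ℝ) ^ ((J : ℝ) - L - 1) := by
          rw [← Real.rpow_natCast (2 : ℝ) J, ← Real.rpow_add (by norm_num)]
          congr 1 <;> ring
  -- lower bound on the number of nonzero coefficients at level js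
  set K : ℕ := 2 ^ (J - L) with hK_def
  have hKcast : (K : ℝ) = (2 : ℝ) ^ ((J : ℝ) - L) := by
    rw [← Nat.cast_sub hJLnat, Real.rpow_natCast, hK_def]
    norm_cast
  have hsubset : Finset.range K ⊆
      (Finset.range (2 ^ js)).filter (fun k : ℕ => (k : ℝ) < (2 : ℝ) ^ ((js : ℝ) / p)) := by
    intro k hk
    rw [Finset.mem_range] at hk
    rw [Finset.mem_filter, Finset.mem_range]
    have hexp : (J : ℝ) - L ≤ (js : ℝ) / p :=
      (le_div_iff₀ hp0).mpr (by linarith [hjs_ge])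
    constructor
    · exact lt_of_lt_of_le hk
        (Nat.pow_le_pow_right (by norm_num) (le_trans (Nat.sub_le J L) hJjs))
    · calc (k : ℝ) < K := by exact_mod_cast hk
        _ = (2 : ℝ) ^ ((J : ℝ) - L) := hKcast
        _ ≤ (2 : ℝ) ^ ((js : ℝ) / p) :=
            Real.rpow_le_rpow_of_exponent_le one_le_two hexp
  have hScard : (2 : ℝ) ^ ((J : ℝ) - L) ≤
      (((Finset.range (2 ^ js)).filter
        (fun k : ℕ => (k : ℝ) < (2 : ℝ) ^ ((js : ℝ) / p))).card : ℝ) := by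
    rw [← hKcast]
    exact_mod_cast (by simpa using Finset.card_le_card hsubset)
  -- lower bound on tTail at level js
  have hT_lb : (2 : ℝ) ^ ((J : ℝ) - L - 1) * (2 : ℝ) ^ (-(js : ℝ)) ≤ tTail β θ J js := by
    apply tTail_ge
    intro A hA hcard
    rw [hsum js]
    set S := (Finset.range (2 ^ js)).filter
      (fun k : ℕ => (k : ℝ) < (2 : ℝ) ^ ((js : ℝ) / p)) with hS_def
    set F := ((Finset.range (2 ^ js) \ A).filter
      (fun k : ℕ => (k : ℝ) < (2 : ℝ) ^ ((js : ℝ) / p))) with hF_def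
    have hsub : S \ A ⊆ F := by
      intro k hk
      rw [Finset.mem_sdiff, hS_def, Finset.mem_filter] at hk
      rw [hF_def, Finset.mem_filter, Finset.mem_sdiff]
      exact ⟨⟨hk.1.1, hk.2⟩, hk.1.2⟩
    have h1 : S.card ≤ (S \ A).card + A.card := Finset.card_le_card_sdiff_add_card
    have h2 : (S \ A).card ≤ F.card := Finset.card_le_card hsub
    have h3 : (S.card : ℝ) ≤ (F.card : ℝ) + ((NJj θ J js : ℕ) : ℝ) := by
      rw [← hcard]
      exact_mod_cast le_trans h1 (by omega)
    have h4 : (2 : ℝ) ^ ((J : ℝ) - L) - (2 : ℝ) ^ ((J : ℝ) - L - 1) =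
        (2 : ℝ) ^ ((J : ℝ) - L - 1) := by
      have : (2 : ℝ) ^ ((J : ℝ) - L) = (2 : ℝ) ^ ((J : ℝ) - L - 1) * 2 := by
        rw [← Real.rpow_add_one (by norm_num : (2:ℝ) ≠ 0)]
        norm_num
      linarith
    have h5 : (2 : ℝ) ^ ((J : ℝ) - L - 1) ≤ (F.card : ℝ) := by
      linarith [hScard, hN, h3, h4]
    apply mul_le_mul_of_nonneg_right h5 (by positivity)
  -- summability of the tail function
  set g : ℕ → ℝ := fun j => if J ≤ j then tTail β θ J j else 0 with hg_def
  have hg0 : ∀ j, 0 ≤ g j := by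
    intro j
    rw [hg_def]
    dsimp only
    split_ifs
    · apply tTail_ge
      intro A hA hcard
      positivity
    · exact le_refl 0
  set r : ℝ := (2 : ℝ) ^ (1 / p - 1) with hr_def
  have hr0 : 0 ≤ r := Real.rpow_nonneg (by norm_num) _
  have hr1 : r < 1 := by
    rw [hr_def]
    apply Real.rpow_lt_one_of_one_lt_of_neg (by norm_num)
    have : 1 / p < 1 := (div_lt_one hp0).mpr hp1
    linarith
  have hgle : ∀ j, g j ≤ 2 * r ^ j := by
    intro j
    rw [hg_def]
    dsimp only
    split_ifs with hj
    · obtain ⟨A, hA, hcard, hle⟩ := tTail_le β θ J j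
      have hx1 : (1 : ℝ) ≤ (2 : ℝ) ^ ((j : ℝ) / p) :=
        Real.one_le_rpow (by norm_num) (by positivity)
      have hcardle : (((Finset.range (2 ^ j) \ A).filter
          (fun k : ℕ => (k : ℝ) < (2 : ℝ) ^ ((j : ℝ) / p))).card : ℝ) ≤
          2 * (2 : ℝ) ^ ((j : ℝ) / p) := by
        have hsub : ((Finset.range (2 ^ j) \ A).filter
            (fun k : ℕ => (k : ℝ) < (2 : ℝ) ^ ((j : ℝ) / p))) ⊆
            Finset.range (⌊(2 : ℝ) ^ ((j : ℝ) / p)⌋₊ + 1) := by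
          intro k hk
          rw [Finset.mem_filter] at hk
          rw [Finset.mem_range, Nat.lt_succ_iff]
          exact Nat.le_floor (le_of_lt hk.2)
        calc (((Finset.range (2 ^ j) \ A).filter
            (fun k : ℕ => (k : ℝ) < (2 : ℝ) ^ ((j : ℝ) / p))).card : ℝ)
            ≤ ((⌊(2 : ℝ) ^ ((j : ℝ) / p)⌋₊ + 1 : ℕ) : ℝ) := by
              have h := Finset.card_le_card hsub
              rw [Finset.card_range] at h
              exact_mod_cast h
          _ ≤ (2 : ℝ) ^ ((j : ℝ) / p) + 1 := by
              push_cast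
              have := Nat.floor_le (le_trans zero_le_one hx1)
              linarith
          _ ≤ 2 * (2 : ℝ) ^ ((j : ℝ) / p) := by linarith
      calc tTail β θ J j ≤ ∑ k ∈ Finset.range (2 ^ j) \ A, (β j k) ^ 2 := hle
        _ = (((Finset.range (2 ^ j) \ A).filter
            (fun k : ℕ => (k : ℝ) < (2 : ℝ) ^ ((j : ℝ) / p))).card : ℝ) *
              (2 : ℝ) ^ (-(j : ℝ)) := hsum j _
        _ ≤ 2 * (2 : ℝ) ^ ((j : ℝ) / p) * (2 : ℝ) ^ (-(j : ℝ)) := by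
            apply mul_le_mul_of_nonneg_right hcardle (by positivity)
        _ = 2 * r ^ j := by
            rw [hr_def, ← Real.rpow_natCast ((2 : ℝ) ^ (1 / p - 1)) j,
              ← Real.rpow_mul (by norm_num), mul_assoc,
              ← Real.rpow_add (by norm_num)]
            congr 2
            field_simp
            ring
    · positivity
  have hgsummable : Summable g :=
    Summable.of_nonneg_of_le hg0 hgle ((summable_geometric_of_lt_one hr0 hr1).mul_left 2)
  -- extract the single term js from the sum
  have hterm : tTail β θ J js ≤ ∑' j : ℕ, g j := by
    have := Summable.le_tsum hgsummable js (fun b _ => hg0 b)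
    rw [hg_def] at this
    simpa [if_pos hJjs] using this
  -- final contradiction
  have hCJ := hC J
  have hpow_pos : (0 : ℝ) < (2 : ℝ) ^ (2 * (J : ℝ) * α) := by positivity
  have hfin : (2 : ℝ) ^ (2 * α * (L : ℝ) - 2) ≤
      (2 : ℝ) ^ (2 * (J : ℝ) * α) * ∑' j : ℕ, g j := by
    calc (2 : ℝ) ^ (2 * α * (L : ℝ) - 2)
        ≤ (2 : ℝ) ^ (2 * (J : ℝ) * α + ((J : ℝ) - L - 1) + (-(js : ℝ))) := by
          apply Real.rpow_le_rpow_of_exponent_le one_le_two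
          have hexp2 : p * ((J : ℝ) - L) = (J : ℝ) - L + 2 * α * (J : ℝ) - 2 * α * (L : ℝ) := by
            simp only [hp_def]; ring
          linarith [hjs_lt, hexp2]
      _ = (2 : ℝ) ^ (2 * (J : ℝ) * α) *
            ((2 : ℝ) ^ ((J : ℝ) - L - 1) * (2 : ℝ) ^ (-(js : ℝ))) := by
          rw [← Real.rpow_add (by norm_num), ← Real.rpow_add (by norm_num), add_assoc]
      _ ≤ (2 : ℝ) ^ (2 * (J : ℝ) * α) * tTail β θ J js := by
          apply mul_le_mul_of_nonneg_left hT_lb (le_of_lt hpow_pos)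
      _ ≤ (2 : ℝ) ^ (2 * (J : ℝ) * α) * ∑' j : ℕ, g j := by
          apply mul_le_mul_of_nonneg_left hterm (le_of_lt hpow_pos)
  rw [hg_def] at hfin
  linarith
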